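/- Under the extended flow φ̂ on Ĥ, every point of b⁻ = {(1, r⁻(1,x)) : x ∈ B⁻} is an equilibrium, and for every x ∈ B⁻ the ω-limit under φ̂ is the single point (1, r⁻(1,x)); in particular b⁻ is an attractor and, symmetrically, b⁺ is a repeller for φ̂. -/

import Mathlib

open Filter Set Topology

noncomputable section

/-- The maximal invariant subset of `K`. -/
def maxInv {M : Type*} (φ : ℝ → M → M) (K : Set M) : Set M :=
  {x ∈ K | ∀ t : ℝ, φ t x ∈ K}

/-- Times `t ≥ 0` such that the forward orbit segment `φ([0,t],x)` stays in `B`;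
its supremum is the exit time `T₊(x)`. -/
def fwdSet {M : Type*} (φ : ℝ → M → M) (B : Set M) (x : M) : Set ℝ :=
  {t : ℝ | 0 ≤ t ∧ ∀ s ∈ Set.Icc 0 t, φ s x ∈ B}

/-- Times `t ≤ 0` such that the backward orbit segment `φ([t,0],x)` stays in `B`;
its infimum is the entrance time `T₋(x)`. -/
def bwdSet {M : Type*} (φ : ℝ → M → M) (B : Set M) (x : M) : Set ℝ :=
  {t : ℝ | t ≤ 0 ∧ ∀ s ∈ Set.Icc t 0, φ s x ∈ B}

/-- The extended phase space `Ĥ = (B ∪ β⁺ ∪ β⁻)/∼`, realized inside `ℝ × M`: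
the block `B` sits at collar coordinate `0`, the exit collar `β⁻` is
`{(s, r⁻(s,x)) : s ∈ [0,1], x ∈ B⁻}` and the entrance collar `β⁺` is
`{(−s, r⁺(s,x)) : s ∈ [0,1], x ∈ B⁺}`; the gluing of `{0} × ∂B` to `∂B` is
automatic in these coordinates. -/
def extSpace {M : Type*} (B Bp Bm : Set M) (rp rm : ℝ → M → M) : Set (ℝ × M) :=
  ({(0:ℝ)} ×ˢ B) ∪
    {q | ∃ s ∈ Set.Icc (0:ℝ) 1, ∃ x ∈ Bm, q = (s, rm s x)} ∪
    {q | ∃ s ∈ Set.Icc (0:ℝ) 1, ∃ x ∈ Bp, q = (-s, rp s x)}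

/-- Under the extended flow `φ̂`, every point of the ersatz infinity
`b⁻ = {(1, r⁻(1,x)) : x ∈ B⁻}` is an equilibrium and for every `x ∈ B⁻` the
ω-limit of `x` under `φ̂` is the single point `(1, r⁻(1,x))`; in particular `b⁻`
is an attractor and, symmetrically, `b⁺ = {(−1, r⁺(1,x)) : x ∈ B⁺}` consists of
equilibria which are α-limits of the points of `B⁺`, i.e. `b⁺` is a repeller. -/
theorem ersatz_infinity_attractor_repeller
    {M : Type*} [TopologicalSpace M] (φ : ℝ → M → M)
    (hcont : Continuous fun q : ℝ × M => φ q.1 q.2)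
    (hφ0 : ∀ x, φ 0 x = x)
    (hφadd : ∀ s t : ℝ, ∀ x, φ s (φ t x) = φ (s + t) x)
    -- `B` is an isolating block with entrance set `Bp = B⁺` and exit set `Bm = B⁻`
    (B Bp Bm bp bm : Set M)
    (hBcomp : IsCompact B) (hBnbhd : B = closure (interior B))
    (hBiso : maxInv φ B ⊆ interior B)
    (hBpfr : Bp ⊆ frontier B) (hBmfr : Bm ⊆ frontier B)
    (hBpB : Bp ⊆ B) (hBmB : Bm ⊆ B)
    (hBmexit : ∀ x ∈ Bm, fwdSet φ B x = {0})
    (hBpenter : ∀ x ∈ Bp, bwdSet φ B x = {0})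
    -- `r±` are injective strong deformation retractions of `B±` onto `b±`
    (rp rm : ℝ → M → M)
    (hrpcont : ContinuousOn (fun q : ℝ × M => rp q.1 q.2) (Set.Icc 0 1 ×ˢ Bp))
    (hrmcont : ContinuousOn (fun q : ℝ × M => rm q.1 q.2) (Set.Icc 0 1 ×ˢ Bm))
    (hrp0 : ∀ x ∈ Bp, rp 0 x = x) (hrm0 : ∀ x ∈ Bm, rm 0 x = x)
    (hrpmaps : ∀ s ∈ Set.Icc (0:ℝ) 1, ∀ x ∈ Bp, rp s x ∈ Bp)
    (hrmmaps : ∀ s ∈ Set.Icc (0:ℝ) 1, ∀ x ∈ Bm, rm s x ∈ Bm)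
    (hrp1 : ∀ x ∈ Bp, rp 1 x ∈ bp) (hrm1 : ∀ x ∈ Bm, rm 1 x ∈ bm)
    (hrpfix : ∀ s ∈ Set.Icc (0:ℝ) 1, ∀ x ∈ bp, rp s x = x)
    (hrmfix : ∀ s ∈ Set.Icc (0:ℝ) 1, ∀ x ∈ bm, rm s x = x)
    (hrpinj : ∀ s ∈ Set.Ico (0:ℝ) 1, Set.InjOn (rp s) Bp)
    (hrminj : ∀ s ∈ Set.Ico (0:ℝ) 1, Set.InjOn (rm s) Bm)
    -- exit and entrance times `T₊`, `T₋` (where they are finite)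
    (Tp Tm : M → ℝ)
    (hTp : ∀ x ∈ B, BddAbove (fwdSet φ B x) → IsLUB (fwdSet φ B x) (Tp x))
    (hTm : ∀ x ∈ B, BddBelow (bwdSet φ B x) → IsGLB (bwdSet φ B x) (Tm x))
    (hexit : ∀ x ∈ B, BddAbove (fwdSet φ B x) → φ (Tp x) x ∈ Bm)
    (henter : ∀ x ∈ B, BddBelow (bwdSet φ B x) → φ (Tm x) x ∈ Bp)
    -- the extended flow `Φ = φ̂`, defined piecewise
    (Φ : ℝ → ℝ × M → ℝ × M)
    (hΦin : ∀ x ∈ B, ∀ t : ℝ,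
      ((0 ≤ t ∧ ∀ s ∈ Set.Icc 0 t, φ s x ∈ B) ∨
        (t ≤ 0 ∧ ∀ s ∈ Set.Icc t 0, φ s x ∈ B)) →
      Φ t (0, x) = (0, φ t x))
    (hΦexit : ∀ x ∈ B, BddAbove (fwdSet φ B x) → ∀ t : ℝ, Tp x ≤ t →
      Φ t (0, x) =
        (1 - Real.exp (Tp x - t), rm (1 - Real.exp (Tp x - t)) (φ (Tp x) x)))
    (hΦenter : ∀ x ∈ B, BddBelow (bwdSet φ B x) → ∀ t : ℝ, t ≤ Tm x →
      Φ t (0, x) =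
        (-(1 - Real.exp (t - Tm x)), rp (1 - Real.exp (t - Tm x)) (φ (Tm x) x)))
    (hΦm : ∀ s ∈ Set.Ico (0:ℝ) 1, ∀ x ∈ Bm, ∀ t : ℝ,
      Φ t (s, rm s x) = Φ (t - Real.log (1 - s)) (0, x))
    (hΦm1 : ∀ x ∈ Bm, ∀ t : ℝ, Φ t (1, rm 1 x) = (1, rm 1 x))
    (hΦp : ∀ s ∈ Set.Ico (0:ℝ) 1, ∀ x ∈ Bp, ∀ t : ℝ,
      Φ t (-s, rp s x) = Φ (t + Real.log (1 - s)) (0, x))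
    (hΦp1 : ∀ x ∈ Bp, ∀ t : ℝ, Φ t (-1, rp 1 x) = (-1, rp 1 x))
    :
    (∀ x ∈ Bm, ∀ t : ℝ, Φ t (1, rm 1 x) = (1, rm 1 x)) ∧
    (∀ x ∈ Bm, Tendsto (fun t : ℝ => Φ t (0, x)) atTop (nhds (1, rm 1 x))) ∧
    (∀ x ∈ Bm, ∀ s ∈ Set.Icc (0:ℝ) 1,
      Tendsto (fun t : ℝ => Φ t (s, rm s x)) atTop (nhds (1, rm 1 x))) ∧
    (∀ x ∈ Bp, ∀ t : ℝ, Φ t (-1, rp 1 x) = (-1, rp 1 x)) ∧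
    (∀ x ∈ Bp, Tendsto (fun t : ℝ => Φ t (0, x)) atBot (nhds (-1, rp 1 x))) ∧
    (∀ x ∈ Bp, ∀ s ∈ Set.Icc (0:ℝ) 1,
      Tendsto (fun t : ℝ => Φ t (-s, rp s x)) atBot (nhds (-1, rp 1 x))) := by
  -- key limit for `Bm`
  have hexp0 : Tendsto (fun t : ℝ => Real.exp (-t)) atTop (nhds 0) :=
    Real.tendsto_exp_neg_atTop_nhds_zero
  have hg : Tendsto (fun t : ℝ => 1 - Real.exp (-t)) atTop (nhds 1) := by
    simpa using hexp0.const_sub 1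
  have hg01 : ∀ t : ℝ, 0 ≤ t → (1 - Real.exp (-t)) ∈ Set.Icc (0:ℝ) 1 := by
    intro t ht
    constructor
    · have : Real.exp (-t) ≤ 1 := Real.exp_le_one_iff.2 (by linarith)
      linarith
    · have := Real.exp_pos (-t); linarith
  have keym : ∀ x ∈ Bm, Tendsto (fun t : ℝ => Φ t (0, x)) atTop
      (nhds (1, rm 1 x)) := by
    intro x hx
    have hxB := hBmB hx
    have hfwd := hBmexit x hx
    have hbdd : BddAbove (fwdSet φ B x) := by rw [hfwd]; exact bddAbove_singleton
    have hTp0 : Tp x = 0 := by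
      have h := hTp x hxB hbdd; rw [hfwd] at h; exact h.unique isLUB_singleton
    have heq : (fun t : ℝ => Φ t (0, x)) =ᶠ[atTop] fun t => ((1 - Real.exp (-t), rm (1 - Real.exp (-t)) x) : ℝ × M) := by
      filter_upwards [eventually_ge_atTop (0:ℝ)] with t ht
      have h := hΦexit x hxB hbdd t (by rw [hTp0]; exact ht)
      rw [hTp0, hφ0, zero_sub] at h
      exact h
    have hrmt : Tendsto (fun t : ℝ => rm (1 - Real.exp (-t)) x) atTop
        (nhds (rm 1 x)) := by
      have hc : ContinuousWithinAt (fun q : ℝ × M => rm q.1 q.2)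
          (Set.Icc 0 1 ×ˢ Bm) (1, x) :=
        hrmcont (1, x) ⟨⟨zero_le_one, le_refl 1⟩, hx⟩
      have hin : Tendsto (fun t : ℝ => ((1 - Real.exp (-t), x) : ℝ × M)) atTop
          (nhdsWithin (1, x) (Set.Icc 0 1 ×ˢ Bm)) := by
        rw [tendsto_nhdsWithin_iff]
        refine ⟨hg.prodMk_nhds tendsto_const_nhds, ?_⟩
        filter_upwards [eventually_ge_atTop (0:ℝ)] with t ht
        exact ⟨hg01 t ht, hx⟩
      exact hc.tendsto.comp hin
    exact (hg.prodMk_nhds hrmt).congr' heq.symm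
  -- key limit for `Bp`
  have hexp0' : Tendsto (fun t : ℝ => Real.exp t) atBot (nhds 0) :=
    Real.tendsto_exp_atBot
  have hg' : Tendsto (fun t : ℝ => 1 - Real.exp t) atBot (nhds 1) := by
    simpa using hexp0'.const_sub 1
  have hg01' : ∀ t : ℝ, t ≤ 0 → (1 - Real.exp t) ∈ Set.Icc (0:ℝ) 1 := by
    intro t ht
    constructor
    · have : Real.exp t ≤ 1 := Real.exp_le_one_iff.2 ht
      linarith
    · have := Real.exp_pos t; linarith
  have keyp : ∀ x ∈ Bp, Tendsto (fun t : ℝ => Φ t (0, x)) atBot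
      (nhds (-1, rp 1 x)) := by
    intro x hx
    have hxB := hBpB hx
    have hbwd := hBpenter x hx
    have hbdd : BddBelow (bwdSet φ B x) := by rw [hbwd]; exact bddBelow_singleton
    have hTm0 : Tm x = 0 := by
      have h := hTm x hxB hbdd; rw [hbwd] at h; exact h.unique isGLB_singleton
    have heq : (fun t : ℝ => Φ t (0, x)) =ᶠ[atBot] fun t => ((-(1 - Real.exp t), rp (1 - Real.exp t) x) : ℝ × M) := by
      filter_upwards [eventually_le_atBot (0:ℝ)] with t ht
      have h := hΦenter x hxB hbdd t (by rw [hTm0]; exact ht)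
      rw [hTm0, hφ0, sub_zero] at h
      exact h
    have hrpt : Tendsto (fun t : ℝ => rp (1 - Real.exp t) x) atBot
        (nhds (rp 1 x)) := by
      have hc : ContinuousWithinAt (fun q : ℝ × M => rp q.1 q.2)
          (Set.Icc 0 1 ×ˢ Bp) (1, x) :=
        hrpcont (1, x) ⟨⟨zero_le_one, le_refl 1⟩, hx⟩
      have hin : Tendsto (fun t : ℝ => ((1 - Real.exp t, x) : ℝ × M)) atBot
          (nhdsWithin (1, x) (Set.Icc 0 1 ×ˢ Bp)) := by
        rw [tendsto_nhdsWithin_iff]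
        refine ⟨hg'.prodMk_nhds tendsto_const_nhds, ?_⟩
        filter_upwards [eventually_le_atBot (0:ℝ)] with t ht
        exact ⟨hg01' t ht, hx⟩
      exact hc.tendsto.comp hin
    have : Tendsto (fun t : ℝ => ((-(1 - Real.exp t), rp (1 - Real.exp t) x) : ℝ × M))
        atBot (nhds (-1, rp 1 x)) := (hg'.neg.prodMk_nhds hrpt)
    exact this.congr' heq.symm
  refine ⟨hΦm1, keym, ?_, hΦp1, keyp, ?_⟩
  · intro x hx s hs
    rcases eq_or_lt_of_le hs.2 with h1 | h1
    · have : ∀ t : ℝ, Φ t (s, rm s x) = (1, rm 1 x) := by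
        intro t; rw [h1]; exact hΦm1 x hx t
      simp only [this]
      exact tendsto_const_nhds
    · have hs' : s ∈ Set.Ico (0:ℝ) 1 := ⟨hs.1, h1⟩
      have heq : ∀ t : ℝ, Φ t (s, rm s x) = Φ (t - Real.log (1 - s)) (0, x) :=
        hΦm s hs' x hx
      simp only [heq]
      exact (keym x hx).comp (tendsto_atTop_add_const_right atTop _ tendsto_id)
  · intro x hx s hs
    rcases eq_or_lt_of_le hs.2 with h1 | h1
    · have : ∀ t : ℝ, Φ t (-s, rp s x) = (-1, rp 1 x) := by
        intro t; rw [h1]; exact hΦp1 x hx t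
      simp only [this]
      exact tendsto_const_nhds
    · have hs' : s ∈ Set.Ico (0:ℝ) 1 := ⟨hs.1, h1⟩
      have heq : ∀ t : ℝ, Φ t (-s, rp s x) = Φ (t + Real.log (1 - s)) (0, x) :=
        hΦp s hs' x hx
      simp only [heq]
      exact (keyp x hx).comp (tendsto_atBot_add_const_right atBot _ tendsto_id)
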